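/- Let a ∈ (0,2) with a ≠ 1, let λ > 0 and μ > 0, and let p, q be real numbers with p + q = 1 and pλ + qμ > 0. Then the function x ↦ (p·exp(−λx) + q·exp(−μx) − exp(−(pλ+qμ)x))·x^(−a−1) is integrable on (0,∞) and ∫₀^∞ (p·exp(−λx) + q·exp(−μx) − exp(−(pλ+qμ)x))·x^(−a−1) dx = Γ(−a)·(p·λ^a + q·μ^a − (pλ+qμ)^a). -/

import Mathlib

open MeasureTheory Real Set Filter

lemma aux_exp_lin {t : ℝ} (ht : 0 ≤ t) : |exp (-t) - 1| ≤ t := by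
  rw [abs_sub_comm, abs_of_nonneg (by simpa using exp_le_one_iff.2 (neg_nonpos.2 ht))]
  nlinarith [add_one_le_exp (-t)]

lemma aux_exp_quad {t : ℝ} (ht : 0 ≤ t) : |exp (-t) - 1 + t| ≤ t ^ 2 / 2 := by
  have h1 : 0 ≤ exp (-t) - 1 + t := by nlinarith [add_one_le_exp (-t)]
  rw [abs_of_nonneg h1]
  have key : ∀ u ∈ Ici (0:ℝ), exp (-u) - 1 + u - u ^ 2 / 2 ≤ 0 := by
    have hanti : AntitoneOn (fun u : ℝ => exp (-u) - 1 + u - u ^ 2 / 2) (Ici 0) := by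
      apply antitoneOn_of_deriv_nonpos (convex_Ici 0)
      · fun_prop
      · fun_prop
      · intro u hu
        rw [interior_Ici] at hu
        have hd : HasDerivAt (fun u : ℝ => exp (-u) - 1 + u - u ^ 2 / 2)
            (-exp (-u) + 1 - u) u := by
          have := ((Real.hasDerivAt_exp (-u)).comp u ((hasDerivAt_id u).neg))
          refine (((this.sub_const 1).add (hasDerivAt_id u)).sub
            (((hasDerivAt_id u).pow 2).div_const 2)).congr_deriv ?_
          simp
        rw [hd.deriv]
        nlinarith [add_one_le_exp (-u), le_of_lt (show (0:ℝ) < u from hu)]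
    intro u hu
    have := hanti (self_mem_Ici) hu hu.out
    simpa using this
  linarith [key t ht]

lemma aux_int_rpow_exp {c k : ℝ} (hc : -1 < c) (hk : 0 < k) :
    IntegrableOn (fun x : ℝ => x ^ c * exp (-(k * x))) (Ioi 0) := by
  have := integrableOn_rpow_mul_exp_neg_mul_rpow hc zero_lt_one hk
  simpa [Real.rpow_one, neg_mul] using this

lemma aux_val_rpow_exp {k : ℝ} (hk : 0 < k) {a : ℝ} (ha : a < 2) :
    ∫ x : ℝ in Ioi 0, x ^ (1 - a) * exp (-(k * x)) = (1 / k) ^ (2 - a) * Gamma (2 - a) := by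
  have := integral_rpow_mul_exp_neg_mul_Ioi (a := 2 - a) (r := k) (by linarith) hk
  simpa [show (2:ℝ) - a - 1 = 1 - a by ring] using this

lemma aux_integrableOn {f : ℝ → ℝ}
    (hf : AEStronglyMeasurable f (volume.restrict (Ioi 0)))
    {c C : ℝ} (hc : -1 < c) (hb0 : ∀ x ∈ Ioc (0:ℝ) 1, |f x| ≤ C * x ^ c)
    {D k : ℝ} (hk : 0 < k) (hb1 : ∀ x ∈ Ioi (1:ℝ), |f x| ≤ D * exp (-(k * x))) :
    IntegrableOn f (Ioi 0) := by
  have hsplit : Ioi (0:ℝ) = Ioc 0 1 ∪ Ioi 1 := (Ioc_union_Ioi_eq_Ioi zero_le_one).symm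
  rw [hsplit]
  apply IntegrableOn.union
  · have hint : IntegrableOn (fun x : ℝ => C * x ^ c) (Ioc 0 1) := by
      apply Integrable.const_mul
      have := (intervalIntegral.intervalIntegrable_rpow' (a:=0) (b:=1) hc)
      rwa [intervalIntegrable_iff_integrableOn_Ioc_of_le zero_le_one] at this
    refine Integrable.mono hint (hf.mono_set (by rw [hsplit]; exact subset_union_left)) ?_
    rw [ae_restrict_iff' measurableSet_Ioc]
    filter_upwards with x hx
    rw [Real.norm_eq_abs, Real.norm_eq_abs]
    exact (hb0 x hx).trans (le_abs_self _)
  · have hint : IntegrableOn (fun x : ℝ => D * exp (-(k * x))) (Ioi 1) := by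
      apply Integrable.const_mul
      exact (by simpa [neg_mul] using exp_neg_integrableOn_Ioi 1 hk :
        IntegrableOn (fun x : ℝ => exp (-(k * x))) (Ioi 1))
    refine Integrable.mono hint (hf.mono_set (by rw [hsplit]; exact subset_union_right)) ?_
    rw [ae_restrict_iff' measurableSet_Ioi]
    filter_upwards with x hx
    rw [Real.norm_eq_abs, Real.norm_eq_abs]
    exact (hb1 x hx).trans (le_abs_self _)

set_option maxHeartbeats 1000000 in
/-- Positive half-line building block of the α-divergence between two
exponentially tempered stable (GTS/CTS) Lévy processes. -/
theorem gts_alpha_divergence_halfline (a l m p q : ℝ)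
    (ha₀ : 0 < a) (ha₂ : a < 2) (ha₁ : a ≠ 1)
    (hl : 0 < l) (hm : 0 < m) (hpq : p + q = 1) (hmix : 0 < p * l + q * m) :
    IntegrableOn
      (fun x : ℝ =>
        (p * exp (-(l * x)) + q * exp (-(m * x)) - exp (-((p * l + q * m) * x)))
          * x ^ (-a - 1)) (Ioi 0) ∧
    ∫ x in Ioi (0:ℝ),
        (p * exp (-(l * x)) + q * exp (-(m * x)) - exp (-((p * l + q * m) * x)))
          * x ^ (-a - 1)
      = Gamma (-a) * (p * l ^ a + q * m ^ a - (p * l + q * m) ^ a) := by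
  have ha0' : a ≠ 0 := ne_of_gt ha₀
  have h1a : (1:ℝ) - a ≠ 0 := sub_ne_zero.2 (Ne.symm ha₁)
  set s : ℝ := p * l + q * m with hs
  have hs0 : 0 < s := hmix
  set k : ℝ := min l (min m s) with hk
  have hk0 : 0 < k := lt_min hl (lt_min hm hs0)
  have hkl : k ≤ l := min_le_left _ _
  have hkm : k ≤ m := le_trans (min_le_right _ _) (min_le_left _ _)
  have hks : k ≤ s := le_trans (min_le_right _ _) (min_le_right _ _)
  set g : ℝ → ℝ := fun x => p * exp (-(l * x)) + q * exp (-(m * x)) - exp (-(s * x)) with hgdef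
  set g1 : ℝ → ℝ := fun x =>
    -(p * l) * exp (-(l * x)) + -(q * m) * exp (-(m * x)) + s * exp (-(s * x)) with hg1def
  set g2 : ℝ → ℝ := fun x =>
    p * l ^ 2 * exp (-(l * x)) + q * m ^ 2 * exp (-(m * x)) - s ^ 2 * exp (-(s * x)) with hg2def
  have expb : ∀ r : ℝ, k ≤ r → ∀ x : ℝ, 0 ≤ x → exp (-(r * x)) ≤ exp (-(k * x)) := by
    intro r hkr x hx
    apply exp_le_exp.2
    nlinarith
  -- pointwise bounds
  have hCq : ∀ x : ℝ, 0 ≤ x →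
      |g x| ≤ ((|p| * l ^ 2 + |q| * m ^ 2 + s ^ 2) / 2) * x ^ 2 := by
    intro x hx
    have hgx : g x = p * (exp (-(l * x)) - 1 + l * x) + q * (exp (-(m * x)) - 1 + m * x)
        - (exp (-(s * x)) - 1 + s * x) := by
      show p * exp (-(l * x)) + q * exp (-(m * x)) - exp (-(s * x)) = _
      linear_combination hpq + x * hs
    have b1 := aux_exp_quad (mul_nonneg hl.le hx)
    have b2 := aux_exp_quad (mul_nonneg hm.le hx)
    have b3 := aux_exp_quad (mul_nonneg hs0.le hx)
    calc |g x| ≤ |p * (exp (-(l * x)) - 1 + l * x) + q * (exp (-(m * x)) - 1 + m * x)|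
          + |exp (-(s * x)) - 1 + s * x| := by rw [hgx]; exact abs_sub _ _
      _ ≤ |p| * |exp (-(l * x)) - 1 + l * x| + |q| * |exp (-(m * x)) - 1 + m * x|
          + |exp (-(s * x)) - 1 + s * x| := by
        rw [← abs_mul, ← abs_mul]; gcongr; exact abs_add_le _ _
      _ ≤ |p| * ((l * x) ^ 2 / 2) + |q| * ((m * x) ^ 2 / 2) + (s * x) ^ 2 / 2 := by
        gcongr
      _ = ((|p| * l ^ 2 + |q| * m ^ 2 + s ^ 2) / 2) * x ^ 2 := by ring
  have hCl : ∀ x : ℝ, 0 ≤ x →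
      |g1 x| ≤ (|p| * l ^ 2 + |q| * m ^ 2 + s ^ 2) * x := by
    intro x hx
    have hgx : g1 x = -(p * l) * (exp (-(l * x)) - 1) + -(q * m) * (exp (-(m * x)) - 1)
        + s * (exp (-(s * x)) - 1) := by
      show -(p * l) * exp (-(l * x)) + -(q * m) * exp (-(m * x)) + s * exp (-(s * x)) = _
      linear_combination -hs
    have b1 := aux_exp_lin (mul_nonneg hl.le hx)
    have b2 := aux_exp_lin (mul_nonneg hm.le hx)
    have b3 := aux_exp_lin (mul_nonneg hs0.le hx)
    calc |g1 x| ≤ |(-(p * l)) * (exp (-(l * x)) - 1) + -(q * m) * (exp (-(m * x)) - 1)|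
          + |s * (exp (-(s * x)) - 1)| := by rw [hgx]; exact abs_add_le _ _
      _ ≤ |(-(p * l))| * |exp (-(l * x)) - 1| + |(-(q * m))| * |exp (-(m * x)) - 1|
          + |s| * |exp (-(s * x)) - 1| := by
        rw [← abs_mul, ← abs_mul, ← abs_mul]; gcongr; exact abs_add_le _ _
      _ ≤ (|p| * l) * (l * x) + (|q| * m) * (m * x) + s * (s * x) := by
        rw [abs_neg, abs_neg, abs_mul, abs_mul, abs_of_pos hl, abs_of_pos hm,
          abs_of_pos hs0]
        gcongr
      _ = (|p| * l ^ 2 + |q| * m ^ 2 + s ^ 2) * x := by ring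
  have hEg : ∀ x : ℝ, 0 ≤ x → |g x| ≤ (|p| + |q| + 1) * exp (-(k * x)) := by
    intro x hx
    have e1 := expb l hkl x hx
    have e2 := expb m hkm x hx
    have e3 := expb s hks x hx
    have p1 : (0:ℝ) < exp (-(l * x)) := exp_pos _
    have p2 : (0:ℝ) < exp (-(m * x)) := exp_pos _
    have p3 : (0:ℝ) < exp (-(s * x)) := exp_pos _
    have h12 : |p * exp (-(l * x)) + q * exp (-(m * x))|
        ≤ |p| * exp (-(l * x)) + |q| * exp (-(m * x)) := by
      refine (abs_add_le _ _).trans ?_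
      rw [abs_mul, abs_mul, abs_of_pos p1, abs_of_pos p2]
    calc |g x| ≤ |p * exp (-(l * x)) + q * exp (-(m * x))| + |exp (-(s * x))| := abs_sub _ _
      _ ≤ (|p| * exp (-(l * x)) + |q| * exp (-(m * x))) + exp (-(s * x)) := by
        rw [abs_of_pos p3]; exact add_le_add_left h12 _
      _ ≤ (|p| * exp (-(k * x)) + |q| * exp (-(k * x))) + exp (-(k * x)) := by
        gcongr <;> positivity
      _ = (|p| + |q| + 1) * exp (-(k * x)) := by ring
  have hEg1 : ∀ x : ℝ, 0 ≤ x → |g1 x| ≤ (|p| * l + |q| * m + s) * exp (-(k * x)) := by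
    intro x hx
    have e1 := expb l hkl x hx
    have e2 := expb m hkm x hx
    have e3 := expb s hks x hx
    have p1 : (0:ℝ) < exp (-(l * x)) := exp_pos _
    have p2 : (0:ℝ) < exp (-(m * x)) := exp_pos _
    have p3 : (0:ℝ) < exp (-(s * x)) := exp_pos _
    have h12 : |(-(p * l)) * exp (-(l * x)) + -(q * m) * exp (-(m * x))|
        ≤ (|p| * l) * exp (-(l * x)) + (|q| * m) * exp (-(m * x)) := by
      refine (abs_add_le _ _).trans ?_
      rw [abs_mul, abs_mul, abs_neg, abs_neg, abs_mul, abs_mul,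
        abs_of_pos p1, abs_of_pos p2, abs_of_pos hl, abs_of_pos hm]
    calc |g1 x| ≤ |(-(p * l)) * exp (-(l * x)) + -(q * m) * exp (-(m * x))|
          + |s * exp (-(s * x))| := abs_add_le _ _
      _ ≤ ((|p| * l) * exp (-(l * x)) + (|q| * m) * exp (-(m * x))) + s * exp (-(s * x)) := by
        rw [abs_mul, abs_of_pos p3, abs_of_pos hs0]; exact add_le_add_left h12 _
      _ ≤ ((|p| * l) * exp (-(k * x)) + (|q| * m) * exp (-(k * x))) + s * exp (-(k * x)) := by
        gcongr <;> positivity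
      _ = (|p| * l + |q| * m + s) * exp (-(k * x)) := by ring
  -- derivatives
  have hdexp : ∀ r x : ℝ, HasDerivAt (fun y : ℝ => exp (-(r * y))) (-r * exp (-(r * x))) x := by
    intro r x
    have h1 : HasDerivAt (fun y : ℝ => -(r * y)) (-r) x := by
      refine ((hasDerivAt_id x).const_mul r).neg.congr_deriv ?_
      simp
    refine ((Real.hasDerivAt_exp (-(r * x))).comp x h1).congr_deriv ?_
    ring
  have hdg : ∀ x, HasDerivAt g (g1 x) x := by
    intro x
    have h := (((hdexp l x).const_mul p).add ((hdexp m x).const_mul q)).sub (hdexp s x)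
    refine h.congr_deriv ?_
    show _ = g1 x
    ring
  have hdg1 : ∀ x, HasDerivAt g1 (g2 x) x := by
    intro x
    have h := (((hdexp l x).const_mul (-(p * l))).add ((hdexp m x).const_mul (-(q * m)))).add
      ((hdexp s x).const_mul s)
    refine h.congr_deriv ?_
    show _ = g2 x
    ring
  -- measurability
  have hcontg : Continuous g := by rw [hgdef]; fun_prop
  have hcontg1 : Continuous g1 := by rw [hg1def]; fun_prop
  have hmeas : ∀ (f : ℝ → ℝ), Continuous f → ∀ c : ℝ,
      AEStronglyMeasurable (fun x => f x * x ^ c) (volume.restrict (Ioi 0)) := by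
    intro f hf c
    apply ContinuousOn.aestronglyMeasurable _ measurableSet_Ioi
    apply hf.continuousOn.mul
    intro x hx
    exact (Real.continuousAt_rpow_const x c (Or.inl (ne_of_gt hx))).continuousWithinAt
  -- rpow identities
  have key1 : ∀ x : ℝ, 0 < x → x * x ^ (-a) = x ^ (1 - a) := by
    intro x hx
    rw [show (1:ℝ) - a = -a + 1 by ring, Real.rpow_add_one hx.ne']
    ring
  have key2 : ∀ x : ℝ, 0 < x → x ^ 2 * x ^ (-a - 1) = x ^ (1 - a) := by
    intro x hx
    rw [← Real.rpow_natCast x 2, ← Real.rpow_add hx]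
    congr 1
    try push_cast
    try ring
  have key3 : ∀ x : ℝ, 0 < x → x ^ 2 * x ^ (-a) = x ^ (2 - a) := by
    intro x hx
    rw [← Real.rpow_natCast x 2, ← Real.rpow_add hx]
    congr 1
    try push_cast
    try ring
  have key4 : ∀ x : ℝ, 0 < x → x * x ^ (1 - a) = x ^ (2 - a) := by
    intro x hx
    rw [show (2:ℝ) - a = (1 - a) + 1 by ring, Real.rpow_add_one hx.ne']
    ring
  have h1a' : (-1:ℝ) < 1 - a := by linarith
  -- integrability
  have I1 : IntegrableOn (fun x : ℝ => g x * x ^ (-a - 1)) (Ioi 0) := by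
    refine aux_integrableOn (hmeas g hcontg _) h1a'
      (C := (|p| * l ^ 2 + |q| * m ^ 2 + s ^ 2) / 2) ?_ hk0
      (D := |p| + |q| + 1) ?_
    · intro x hx
      have hx0 : 0 < x := hx.1
      have hrp : (0:ℝ) ≤ x ^ (-a - 1) := Real.rpow_nonneg hx0.le _
      rw [abs_mul, abs_of_nonneg hrp]
      calc |g x| * x ^ (-a - 1)
          ≤ (((|p| * l ^ 2 + |q| * m ^ 2 + s ^ 2) / 2) * x ^ 2) * x ^ (-a - 1) := by
            gcongr; exact hCq x hx0.le
        _ = ((|p| * l ^ 2 + |q| * m ^ 2 + s ^ 2) / 2) * x ^ (1 - a) := by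
            rw [mul_assoc, key2 x hx0]
    · intro x hx
      have hx0 : (0:ℝ) < x := lt_trans one_pos hx
      have hrp : (0:ℝ) ≤ x ^ (-a - 1) := Real.rpow_nonneg hx0.le _
      have h1 : x ^ (-a - 1) ≤ 1 :=
        Real.rpow_le_one_of_one_le_of_nonpos hx.le (by linarith)
      rw [abs_mul, abs_of_nonneg hrp]
      calc |g x| * x ^ (-a - 1) ≤ ((|p| + |q| + 1) * exp (-(k * x))) * 1 := by
            exact mul_le_mul (hEg x hx0.le) h1 hrp (by positivity)
        _ = (|p| + |q| + 1) * exp (-(k * x)) := by ring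
  have I2 : IntegrableOn (fun x : ℝ => g1 x * x ^ (-a)) (Ioi 0) := by
    refine aux_integrableOn (hmeas g1 hcontg1 _) h1a'
      (C := |p| * l ^ 2 + |q| * m ^ 2 + s ^ 2) ?_ hk0
      (D := |p| * l + |q| * m + s) ?_
    · intro x hx
      have hx0 : 0 < x := hx.1
      have hrp : (0:ℝ) ≤ x ^ (-a) := Real.rpow_nonneg hx0.le _
      rw [abs_mul, abs_of_nonneg hrp]
      calc |g1 x| * x ^ (-a)
          ≤ ((|p| * l ^ 2 + |q| * m ^ 2 + s ^ 2) * x) * x ^ (-a) := by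
            gcongr; exact hCl x hx0.le
        _ = (|p| * l ^ 2 + |q| * m ^ 2 + s ^ 2) * x ^ (1 - a) := by
            rw [mul_assoc, key1 x hx0]
    · intro x hx
      have hx0 : (0:ℝ) < x := lt_trans one_pos hx
      have hrp : (0:ℝ) ≤ x ^ (-a) := Real.rpow_nonneg hx0.le _
      have h1 : x ^ (-a) ≤ 1 :=
        Real.rpow_le_one_of_one_le_of_nonpos hx.le (by linarith)
      rw [abs_mul, abs_of_nonneg hrp]
      calc |g1 x| * x ^ (-a) ≤ ((|p| * l + |q| * m + s) * exp (-(k * x))) * 1 := by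
            exact mul_le_mul (hEg1 x hx0.le) h1 hrp (by positivity)
        _ = (|p| * l + |q| * m + s) * exp (-(k * x)) := by ring
  have il := aux_int_rpow_exp h1a' hl
  have im := aux_int_rpow_exp h1a' hm
  have is := aux_int_rpow_exp h1a' hs0
  have I3 : IntegrableOn (fun x : ℝ => g2 x * x ^ (1 - a)) (Ioi 0) := by
    have h := ((il.const_mul (p * l ^ 2)).add (im.const_mul (q * m ^ 2))).sub
      (is.const_mul (s ^ 2))
    refine IntegrableOn.congr_fun h (fun x hx => ?_) measurableSet_Ioi
    simp only [Pi.add_apply, Pi.sub_apply]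
    show _ = g2 x * x ^ (1 - a)
    ring
  -- derivatives of the rpow antiderivatives
  have hv1 : ∀ x ∈ Ioi (0:ℝ), HasDerivAt (fun y : ℝ => -(1 / a) * y ^ (-a)) (x ^ (-a - 1)) x := by
    intro x hx
    have h := (Real.hasDerivAt_rpow_const (p := -a) (Or.inl (ne_of_gt hx))).const_mul (-(1 / a))
    refine h.congr_deriv ?_
    field_simp
  have hv2 : ∀ x ∈ Ioi (0:ℝ),
      HasDerivAt (fun y : ℝ => (1 / (1 - a)) * y ^ (1 - a)) (x ^ (-a)) x := by
    intro x hx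
    have h := (Real.hasDerivAt_rpow_const (p := 1 - a) (Or.inl (ne_of_gt hx))).const_mul
      (1 / (1 - a))
    refine h.congr_deriv ?_
    rw [show (1:ℝ) - a - 1 = -a by ring]
    field_simp
  -- limits at 0 and infinity
  have hrzero : Tendsto (fun x : ℝ => x ^ (2 - a)) (nhdsWithin 0 (Ioi 0)) (nhds 0) := by
    have hc : ContinuousAt (fun x : ℝ => x ^ (2 - a)) 0 :=
      Real.continuousAt_rpow_const 0 _ (Or.inr (by linarith))
    have := hc.tendsto.mono_left (nhdsWithin_le_nhds (s := Ioi (0:ℝ)) (a := (0:ℝ)))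
    simpa [Real.zero_rpow (show (2:ℝ) - a ≠ 0 by intro h; linarith)] using this
  have T10 : Tendsto (fun x : ℝ => g x * (-(1 / a) * x ^ (-a)))
      (nhdsWithin 0 (Ioi 0)) (nhds 0) := by
    apply squeeze_zero_norm'
      (a := fun x : ℝ => (((|p| * l ^ 2 + |q| * m ^ 2 + s ^ 2) / 2) * (1 / a)) * x ^ (2 - a))
    · filter_upwards [self_mem_nhdsWithin] with x hx
      have hx0 : (0:ℝ) < x := hx
      have hrp : (0:ℝ) ≤ x ^ (-a) := Real.rpow_nonneg hx0.le _
      rw [Real.norm_eq_abs, abs_mul, abs_mul, abs_neg,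
        abs_of_nonneg hrp, abs_of_pos (by positivity : (0:ℝ) < 1 / a)]
      calc |g x| * (1 / a * x ^ (-a))
          ≤ ((|p| * l ^ 2 + |q| * m ^ 2 + s ^ 2) / 2 * x ^ 2) * (1 / a * x ^ (-a)) := by
            gcongr; exact hCq x hx0.le
        _ = (((|p| * l ^ 2 + |q| * m ^ 2 + s ^ 2) / 2) * (1 / a)) * (x ^ 2 * x ^ (-a)) := by
            ring
        _ = _ := by rw [key3 x hx0]
    · simpa using hrzero.const_mul (((|p| * l ^ 2 + |q| * m ^ 2 + s ^ 2) / 2) * (1 / a))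
  have T1top : Tendsto (fun x : ℝ => g x * (-(1 / a) * x ^ (-a))) atTop (nhds 0) := by
    apply squeeze_zero_norm' (a := fun x : ℝ => ((|p| + |q| + 1) * (1 / a)) * x ^ (-a))
    · filter_upwards [eventually_gt_atTop (0:ℝ)] with x hx0
      have hrp : (0:ℝ) ≤ x ^ (-a) := Real.rpow_nonneg hx0.le _
      have hb : |g x| ≤ |p| + |q| + 1 := by
        refine (hEg x hx0.le).trans ?_
        have hle : exp (-(k * x)) ≤ 1 := exp_le_one_iff.2 (by nlinarith)
        nlinarith [abs_nonneg p, abs_nonneg q]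
      rw [Real.norm_eq_abs, abs_mul, abs_mul, abs_neg,
        abs_of_nonneg hrp, abs_of_pos (by positivity : (0:ℝ) < 1 / a)]
      calc |g x| * (1 / a * x ^ (-a)) ≤ (|p| + |q| + 1) * (1 / a * x ^ (-a)) := by
            gcongr
        _ = ((|p| + |q| + 1) * (1 / a)) * x ^ (-a) := by ring
    · simpa using (tendsto_rpow_neg_atTop ha₀).const_mul ((|p| + |q| + 1) * (1 / a))
  have T20 : Tendsto (fun x : ℝ => g1 x * ((1 / (1 - a)) * x ^ (1 - a)))
      (nhdsWithin 0 (Ioi 0)) (nhds 0) := by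
    apply squeeze_zero_norm'
      (a := fun x : ℝ => ((|p| * l ^ 2 + |q| * m ^ 2 + s ^ 2) * |1 / (1 - a)|) * x ^ (2 - a))
    · filter_upwards [self_mem_nhdsWithin] with x hx
      have hx0 : (0:ℝ) < x := hx
      have hrp : (0:ℝ) ≤ x ^ (1 - a) := Real.rpow_nonneg hx0.le _
      rw [Real.norm_eq_abs, abs_mul, abs_mul, abs_of_nonneg hrp]
      calc |g1 x| * (|1 / (1 - a)| * x ^ (1 - a))
          ≤ ((|p| * l ^ 2 + |q| * m ^ 2 + s ^ 2) * x) * (|1 / (1 - a)| * x ^ (1 - a)) := by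
            gcongr; exact hCl x hx0.le
        _ = ((|p| * l ^ 2 + |q| * m ^ 2 + s ^ 2) * |1 / (1 - a)|) * (x * x ^ (1 - a)) := by
            ring
        _ = _ := by rw [key4 x hx0]
    · simpa using hrzero.const_mul ((|p| * l ^ 2 + |q| * m ^ 2 + s ^ 2) * |1 / (1 - a)|)
  have T2top : Tendsto (fun x : ℝ => g1 x * ((1 / (1 - a)) * x ^ (1 - a))) atTop (nhds 0) := by
    apply squeeze_zero_norm'
      (a := fun x : ℝ => ((|p| * l + |q| * m + s) * |1 / (1 - a)|)
        * (x ^ (1 - a) * exp (-(k * x))))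
    · filter_upwards [eventually_gt_atTop (0:ℝ)] with x hx0
      have hrp : (0:ℝ) ≤ x ^ (1 - a) := Real.rpow_nonneg hx0.le _
      rw [Real.norm_eq_abs, abs_mul, abs_mul, abs_of_nonneg hrp]
      calc |g1 x| * (|1 / (1 - a)| * x ^ (1 - a))
          ≤ ((|p| * l + |q| * m + s) * exp (-(k * x))) * (|1 / (1 - a)| * x ^ (1 - a)) := by
            gcongr; exact hEg1 x hx0.le
        _ = ((|p| * l + |q| * m + s) * |1 / (1 - a)|) * (x ^ (1 - a) * exp (-(k * x))) := by
            ring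
    · have := (tendsto_rpow_mul_exp_neg_mul_atTop_nhds_zero (1 - a) k hk0).const_mul
        ((|p| * l + |q| * m + s) * |1 / (1 - a)|)
      simpa [neg_mul] using this
  -- integration by parts, twice
  have I1' : IntegrableOn (g * fun x : ℝ => x ^ (-a - 1)) (Ioi 0) := by
    simpa [Pi.mul_def] using I1
  have I2mid : IntegrableOn (g1 * fun x : ℝ => -(1 / a) * x ^ (-a)) (Ioi 0) := by
    refine IntegrableOn.congr_fun (I2.const_mul (-(1 / a))) (fun x hx => ?_) measurableSet_Ioi
    show -(1 / a) * (g1 x * x ^ (-a)) = g1 x * (-(1 / a) * x ^ (-a))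
    ring
  have ibp1 := integral_Ioi_mul_deriv_eq_deriv_mul (fun x _ => hdg x) hv1 I1' I2mid T10 T1top
  have I2' : IntegrableOn (g1 * fun x : ℝ => x ^ (-a)) (Ioi 0) := by
    simpa [Pi.mul_def] using I2
  have I3mid : IntegrableOn (g2 * fun x : ℝ => (1 / (1 - a)) * x ^ (1 - a)) (Ioi 0) := by
    refine IntegrableOn.congr_fun (I3.const_mul (1 / (1 - a))) (fun x hx => ?_) measurableSet_Ioi
    show (1 / (1 - a)) * (g2 x * x ^ (1 - a)) = g2 x * ((1 / (1 - a)) * x ^ (1 - a))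
    ring
  have ibp2 := integral_Ioi_mul_deriv_eq_deriv_mul (fun x _ => hdg1 x) hv2 I2' I3mid T20 T2top
  -- pulling out the constants
  have e1 : (∫ x in Ioi (0:ℝ), g1 x * (-(1 / a) * x ^ (-a)))
      = -(1 / a) * ∫ x in Ioi (0:ℝ), g1 x * x ^ (-a) := by
    rw [← integral_const_mul]
    refine setIntegral_congr_fun measurableSet_Ioi (fun x hx => ?_)
    ring
  have e2 : (∫ x in Ioi (0:ℝ), g2 x * ((1 / (1 - a)) * x ^ (1 - a)))
      = (1 / (1 - a)) * ∫ x in Ioi (0:ℝ), g2 x * x ^ (1 - a) := by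
    rw [← integral_const_mul]
    refine setIntegral_congr_fun measurableSet_Ioi (fun x hx => ?_)
    ring
  -- the Gamma integral
  have hpw : ∀ r : ℝ, 0 < r → r ^ 2 * (1 / r) ^ (2 - a) = r ^ a := by
    intro r hr
    rw [one_div, ← Real.rpow_neg_one r, ← Real.rpow_natCast r 2, ← Real.rpow_mul hr.le,
      ← Real.rpow_add hr]
    congr 1
    try push_cast
    try ring
  have J : (∫ x in Ioi (0:ℝ), g2 x * x ^ (1 - a))
      = Gamma (2 - a) * (p * l ^ a + q * m ^ a - s ^ a) := by
    calc (∫ x in Ioi (0:ℝ), g2 x * x ^ (1 - a))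
        = ∫ x in Ioi (0:ℝ), (p * l ^ 2 * (x ^ (1 - a) * exp (-(l * x)))
            + q * m ^ 2 * (x ^ (1 - a) * exp (-(m * x))))
            - s ^ 2 * (x ^ (1 - a) * exp (-(s * x))) := by
          refine setIntegral_congr_fun measurableSet_Ioi (fun x hx => ?_)
          show g2 x * x ^ (1 - a) = _
          ring
      _ = (p * l ^ 2 * ∫ x in Ioi (0:ℝ), x ^ (1 - a) * exp (-(l * x)))
            + (q * m ^ 2 * ∫ x in Ioi (0:ℝ), x ^ (1 - a) * exp (-(m * x)))
            - s ^ 2 * ∫ x in Ioi (0:ℝ), x ^ (1 - a) * exp (-(s * x)) := by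
          have ia1 : IntegrableOn (fun x : ℝ => p * l ^ 2 * (x ^ (1 - a) * exp (-(l * x))))
              (Ioi 0) := il.const_mul _
          have ia2 : IntegrableOn (fun x : ℝ => q * m ^ 2 * (x ^ (1 - a) * exp (-(m * x))))
              (Ioi 0) := im.const_mul _
          have ia3 : IntegrableOn (fun x : ℝ => s ^ 2 * (x ^ (1 - a) * exp (-(s * x))))
              (Ioi 0) := is.const_mul _
          have ia12 : IntegrableOn (fun x : ℝ => p * l ^ 2 * (x ^ (1 - a) * exp (-(l * x)))
              + q * m ^ 2 * (x ^ (1 - a) * exp (-(m * x)))) (Ioi 0) := ia1.add ia2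
          rw [integral_sub ia12 ia3, integral_add ia1 ia2,
            integral_const_mul, integral_const_mul, integral_const_mul]
      _ = Gamma (2 - a) * (p * (l ^ 2 * (1 / l) ^ (2 - a)) + q * (m ^ 2 * (1 / m) ^ (2 - a))
            - s ^ 2 * (1 / s) ^ (2 - a)) := by
          rw [aux_val_rpow_exp hl ha₂, aux_val_rpow_exp hm ha₂, aux_val_rpow_exp hs0 ha₂]
          ring
      _ = _ := by rw [hpw l hl, hpw m hm, hpw s hs0]
  have hGamma : Gamma (2 - a) = (1 - a) * (-a) * Gamma (-a) := by
    have hne1 : (-a : ℝ) ≠ 0 := neg_ne_zero.2 ha0'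
    have hne2 : (-a + 1 : ℝ) ≠ 0 := by
      intro h; apply ha₁; linarith
    rw [show (2:ℝ) - a = -a + 1 + 1 by ring, Real.Gamma_add_one hne2,
      Real.Gamma_add_one hne1]
    ring
  refine ⟨I1, ?_⟩
  have hshow : (∫ x in Ioi (0:ℝ),
      (p * exp (-(l * x)) + q * exp (-(m * x)) - exp (-(s * x))) * x ^ (-a - 1))
      = ∫ x in Ioi (0:ℝ), g x * x ^ (-a - 1) := by
    refine setIntegral_congr_fun measurableSet_Ioi (fun x hx => ?_)
    rfl
  rw [hshow]
  have ibp1' : (∫ x in Ioi (0:ℝ), g x * x ^ (-a - 1))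
      = 0 - 0 - ∫ x in Ioi (0:ℝ), g1 x * (-(1 / a) * x ^ (-a)) := by simpa only [] using ibp1
  have ibp2' : (∫ x in Ioi (0:ℝ), g1 x * x ^ (-a))
      = 0 - 0 - ∫ x in Ioi (0:ℝ), g2 x * ((1 / (1 - a)) * x ^ (1 - a)) := by simpa only [] using ibp2
  rw [ibp1', e1, ibp2', e2, J, hGamma]
  field_simp
  ring
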